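/- Uniform Gronwall lemma: let r > 0 and let y, a, b : [t₀, ∞) → ℝ be nonnegative continuous functions with y differentiable, satisfying y'(t) ≤ a(t)·y(t) + b(t) for all t ≥ t₀. Suppose there are constants a₁, a₂, a₃ ≥ 0 such that for every t ≥ t₀: ∫_t^{t+r} a(s) ds ≤ a₁, ∫_t^{t+r} b(s) ds ≤ a₂, and ∫_t^{t+r} y(s) ds ≤ a₃. Then y(t + r) ≤ (a₃/r + a₂)·e^{a₁} for all t ≥ t₀. -/

import Mathlib

open Set MeasureTheory intervalIntegral

set_option maxHeartbeats 1000000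

theorem stmt14 (r t₀ a₁ a₂ a₃ : ℝ) (hr : 0 < r)
    (y y' a b : ℝ → ℝ)
    (hy0 : ∀ t ≥ t₀, 0 ≤ y t) (ha0 : ∀ t ≥ t₀, 0 ≤ a t) (hb0 : ∀ t ≥ t₀, 0 ≤ b t)
    (hyc : ContinuousOn y (Ici t₀)) (hac : ContinuousOn a (Ici t₀))
    (hbc : ContinuousOn b (Ici t₀))
    (hderiv : ∀ t ≥ t₀, HasDerivAt y (y' t) t)
    (hineq : ∀ t ≥ t₀, y' t ≤ a t * y t + b t)
    (ha1 : 0 ≤ a₁) (ha2 : 0 ≤ a₂) (ha3 : 0 ≤ a₃)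
    (hia : ∀ t ≥ t₀, (∫ s in t..t+r, a s) ≤ a₁)
    (hib : ∀ t ≥ t₀, (∫ s in t..t+r, b s) ≤ a₂)
    (hiy : ∀ t ≥ t₀, (∫ s in t..t+r, y s) ≤ a₃) :
    ∀ t ≥ t₀, y (t + r) ≤ (a₃ / r + a₂) * Real.exp a₁ := by
  -- interval integrability of any of y, a, b on subintervals of [t₀,∞)
  have hii : ∀ (f : ℝ → ℝ), ContinuousOn f (Ici t₀) → ∀ u v, t₀ ≤ u → t₀ ≤ v →
      IntervalIntegrable f volume u v := by
    intro f hf u v hu hv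
    apply ContinuousOn.intervalIntegrable
    apply hf.mono
    intro x hx
    rcases le_total u v with h | h
    · rw [uIcc_of_le h] at hx; exact le_trans hu hx.1
    · rw [uIcc_of_ge h] at hx; exact le_trans hv hx.1
  intro t ht
  have hrt : t ≤ t + r := by linarith
  have ht0r : t₀ ≤ t + r := by linarith
  -- key pointwise estimate
  have key : ∀ s ∈ Icc t (t + r), y (t + r) ≤ (y s + a₂) * Real.exp a₁ := by
    intro s hs
    have hs0 : t₀ ≤ s := le_trans ht hs.1
    set F : ℝ → ℝ := fun u => (∫ σ in s..u, b σ) - y u * Real.exp (-(∫ σ in s..u, a σ))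
      with hFdef
    have hsubIcc : Icc s (t + r) ⊆ Ici t₀ := fun x hx => le_trans hs0 hx.1
    have huIcc : uIcc s (t + r) = Icc s (t + r) := uIcc_of_le hs.2
    -- continuity of F on Icc s (t+r)
    have hBcont : ContinuousOn (fun u => ∫ σ in s..u, b σ) (Icc s (t + r)) := by
      have := continuousOn_primitive_interval' (μ := volume) (b₁ := s) (b₂ := t + r)
        (f := b) (hii b hbc s (t + r) hs0 ht0r) left_mem_uIcc
      rwa [huIcc] at this
    have hAcont : ContinuousOn (fun u => ∫ σ in s..u, a σ) (Icc s (t + r)) := by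
      have := continuousOn_primitive_interval' (μ := volume) (b₁ := s) (b₂ := t + r)
        (f := a) (hii a hac s (t + r) hs0 ht0r) left_mem_uIcc
      rwa [huIcc] at this
    have hFcont : ContinuousOn F (Icc s (t + r)) := by
      apply hBcont.sub
      exact (hyc.mono hsubIcc).mul ((Real.continuous_exp.comp_continuousOn hAcont.neg))
    -- derivative of F on the interior
    have hint : interior (Icc s (t + r)) = Ioo s (t + r) := interior_Icc
    have hFderiv : ∀ u ∈ interior (Icc s (t + r)),
        HasDerivWithinAt F (b u - (y' u - a u * y u) *
          Real.exp (-(∫ σ in s..u, a σ))) (interior (Icc s (t + r))) u := by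
      intro u hu
      rw [hint] at hu
      have hu0 : t₀ ≤ u := le_trans hs0 hu.1.le
      have hu0' : t₀ < u := lt_of_le_of_lt hs0 hu.1
      have hmem : Ici t₀ ∈ nhds u := Ici_mem_nhds hu0'
      have hmeasb : StronglyMeasurableAtFilter b (nhds u) volume :=
        ⟨Ici t₀, hmem, hbc.aestronglyMeasurable measurableSet_Ici⟩
      have hmeasa : StronglyMeasurableAtFilter a (nhds u) volume :=
        ⟨Ici t₀, hmem, hac.aestronglyMeasurable measurableSet_Ici⟩
      have hB : HasDerivAt (fun u => ∫ σ in s..u, b σ) (b u) u :=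
        integral_hasDerivAt_right (hii b hbc s u hs0 hu0) hmeasb
          (hbc.continuousAt hmem)
      have hA : HasDerivAt (fun u => ∫ σ in s..u, a σ) (a u) u :=
        integral_hasDerivAt_right (hii a hac s u hs0 hu0) hmeasa
          (hac.continuousAt hmem)
      have hE : HasDerivAt (fun u => Real.exp (-(∫ σ in s..u, a σ)))
          (Real.exp (-(∫ σ in s..u, a σ)) * (-(a u))) u := hA.neg.exp
      have hy' : HasDerivAt y (y' u) u := hderiv u hu0
      have hF : HasDerivAt F (b u - (y' u * Real.exp (-(∫ σ in s..u, a σ)) +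
          y u * (Real.exp (-(∫ σ in s..u, a σ)) * (-(a u))))) u := hB.sub (hy'.mul hE)
      have : b u - (y' u * Real.exp (-(∫ σ in s..u, a σ)) +
          y u * (Real.exp (-(∫ σ in s..u, a σ)) * (-(a u)))) =
          b u - (y' u - a u * y u) * Real.exp (-(∫ σ in s..u, a σ)) := by ring
      rw [this] at hF
      exact hF.hasDerivWithinAt
    -- the derivative is nonnegative
    have hFnonneg : ∀ u ∈ interior (Icc s (t + r)),
        0 ≤ b u - (y' u - a u * y u) * Real.exp (-(∫ σ in s..u, a σ)) := by
      intro u hu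
      rw [hint] at hu
      have hu0 : t₀ ≤ u := le_trans hs0 hu.1.le
      have hAnn : 0 ≤ ∫ σ in s..u, a σ := by
        apply intervalIntegral.integral_nonneg hu.1.le
        intro x hx
        exact ha0 x (le_trans hs0 hx.1)
      have hE1 : Real.exp (-(∫ σ in s..u, a σ)) ≤ 1 := by
        rw [Real.exp_le_one_iff]; linarith
      have hE0 : 0 < Real.exp (-(∫ σ in s..u, a σ)) := Real.exp_pos _
      have hc : y' u - a u * y u ≤ b u := by have := hineq u hu0; linarith
      have hbu : 0 ≤ b u := hb0 u hu0
      nlinarith [mul_le_mul_of_nonneg_right hc hE0.le]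
    -- F is monotone on Icc s (t+r)
    have hmono : MonotoneOn F (Icc s (t + r)) :=
      monotoneOn_of_hasDerivWithinAt_nonneg (convex_Icc _ _) hFcont hFderiv hFnonneg
    have hFs : F s = -(y s) := by
      simp [hFdef, intervalIntegral.integral_same]
    have hle : F s ≤ F (t + r) :=
      hmono ⟨le_refl s, hs.2⟩ ⟨hs.2, le_refl _⟩ hs.2
    -- bounds on the integrals from s to t+r
    set Ia := ∫ σ in s..t + r, a σ with hIa
    set Ib := ∫ σ in s..t + r, b σ with hIb
    have hsplit : ∀ (f : ℝ → ℝ), ContinuousOn f (Ici t₀) →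
        (∫ σ in t..s, f σ) + (∫ σ in s..t + r, f σ) = ∫ σ in t..t + r, f σ := by
      intro f hf
      exact intervalIntegral.integral_add_adjacent_intervals
        (hii f hf t s ht hs0) (hii f hf s (t + r) hs0 ht0r)
    have hfirst : ∀ (f : ℝ → ℝ), (∀ x ≥ t₀, 0 ≤ f x) → 0 ≤ ∫ σ in t..s, f σ := by
      intro f hf
      apply intervalIntegral.integral_nonneg hs.1
      intro x hx
      exact hf x (le_trans ht hx.1)
    have hIa1 : Ia ≤ a₁ := by
      have h1 := hsplit a hac
      have h2 := hfirst a ha0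
      have h3 := hia t ht
      rw [hIa]; linarith
    have hIb2 : Ib ≤ a₂ := by
      have h1 := hsplit b hbc
      have h2 := hfirst b hb0
      have h3 := hib t ht
      rw [hIb]; linarith
    have hIann : 0 ≤ Ia := by
      apply intervalIntegral.integral_nonneg hs.2
      intro x hx
      exact ha0 x (le_trans hs0 hx.1)
    -- conclude the pointwise estimate
    have hF2 : Ib - y (t + r) * Real.exp (-Ia) ≥ -(y s) := by
      rw [← hFs]; exact hle
    have hEpos : 0 < Real.exp (-Ia) := Real.exp_pos _
    have hexp : Real.exp Ia ≤ Real.exp a₁ := Real.exp_le_exp.mpr hIa1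
    have hys : 0 ≤ y s := hy0 s hs0
    have h4 : y (t + r) * Real.exp (-Ia) ≤ y s + a₂ := by linarith
    have h5 : y (t + r) = y (t + r) * Real.exp (-Ia) * Real.exp Ia := by
      rw [mul_assoc, ← Real.exp_add]; simp
    rw [h5]
    calc y (t + r) * Real.exp (-Ia) * Real.exp Ia
        ≤ (y s + a₂) * Real.exp Ia :=
          mul_le_mul_of_nonneg_right h4 (Real.exp_pos _).le
      _ ≤ (y s + a₂) * Real.exp a₁ :=
          mul_le_mul_of_nonneg_left hexp (by linarith)
  -- integrate the pointwise estimate in s over [t, t+r]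
  have hyint : IntervalIntegrable y volume t (t + r) := hii y hyc t (t + r) ht ht0r
  have hRHSint : IntervalIntegrable (fun s => (y s + a₂) * Real.exp a₁) volume t (t + r) :=
    ((hyint.add intervalIntegrable_const).mul_const _)
  have hmono2 : (∫ s in t..t + r, y (t + r)) ≤ ∫ s in t..t + r, (y s + a₂) * Real.exp a₁ := by
    apply intervalIntegral.integral_mono_on hrt intervalIntegrable_const hRHSint
    intro x hx
    exact key x hx
  have hconst : (∫ s in t..t + r, y (t + r)) = r * y (t + r) := by
    rw [intervalIntegral.integral_const]; simp [smul_eq_mul]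
  have hRHS : (∫ s in t..t + r, (y s + a₂) * Real.exp a₁) =
      ((∫ s in t..t + r, y s) + r * a₂) * Real.exp a₁ := by
    rw [intervalIntegral.integral_mul_const,
      intervalIntegral.integral_add hyint intervalIntegrable_const,
      intervalIntegral.integral_const]
    simp [smul_eq_mul]
  have h6 : r * y (t + r) ≤ ((∫ s in t..t + r, y s) + r * a₂) * Real.exp a₁ := by
    rw [← hconst, ← hRHS]; exact hmono2
  have h7 : r * y (t + r) ≤ (a₃ + r * a₂) * Real.exp a₁ := by
    have := hiy t ht
    have hE := (Real.exp_pos a₁).le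
    nlinarith
  have h8 : (a₃ / r + a₂) * Real.exp a₁ = (a₃ + r * a₂) * Real.exp a₁ / r := by
    field_simp
  rw [h8, le_div_iff₀ hr]
  linarith
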